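/- In the arrow category of abelian groups with homotopies given by diagonal maps (α : A'' → B' with g' − f' = α∂, g'' − f'' = ∂α), let f = (f', f'') : A → B be a morphism with f' an isomorphism. Then f is a homotopy equivalence if and only if f is an isomorphism (i.e. f'' is also an isomorphism). Explicitly, if f' = 1 and (g, α, β) is an adjoint homotopy equivalence for f (with α : 1_A ≃ gf, β : fg ≃ 1_B, f∘α + β∘f = 0), then h = g'' + ∂_A β is a two-sided inverse of f''. -/
import Mathlib


/-- In the arrow category `Ab²` (objects `∂ : •' → •''`, morphisms commutative
squares, diagonal homotopies), a morphism `f = (f', f'')` with `f'` invertible is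
a homotopy equivalence iff it is an isomorphism.  Explicitly, with `f' = 1`
(so `A' = B' = Z`) and an adjoint equivalence `(g, α : 1 ≃ gf, β : fg ≃ 1)`
satisfying the triangle identity `f∘α + β∘f = 0`, the map `h = g'' + ∂_A β` is a
two-sided inverse of `f''`; in particular `f''` is bijective. -/
theorem stmt14 {Z A'' B'' : Type*}
    [AddCommGroup Z] [AddCommGroup A''] [AddCommGroup B'']
    (dA : Z →+ A'') (dB : Z →+ B'') (f'' : A'' →+ B'')
    (hsq : ∀ z : Z, f'' (dA z) = dB z)
    (g' : Z →+ Z) (g'' : B'' →+ A'')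
    (hgsq : ∀ z : Z, g'' (dB z) = dA (g' z))
    (α : A'' →+ Z)
    (hα1 : ∀ z : Z, g' z - z = α (dA z))
    (hα2 : ∀ x : A'', g'' (f'' x) - x = dA (α x))
    (β : B'' →+ Z)
    (hβ1 : ∀ z : Z, z - g' z = β (dB z))
    (hβ2 : ∀ y : B'', y - f'' (g'' y) = dB (β y))
    (htri : ∀ x : A'', α x + β (f'' x) = 0) :
    Function.Bijective f'' ∧
      (∀ y : B'', f'' (g'' y + dA (β y)) = y) ∧
      (∀ x : A'', g'' (f'' x) + dA (β (f'' x)) = x) := by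
  have hr : ∀ y : B'', f'' (g'' y + dA (β y)) = y := by
    intro y
    have h := hβ2 y
    rw [map_add, hsq]
    linear_combination (norm := abel) -h
  have hl : ∀ x : A'', g'' (f'' x) + dA (β (f'' x)) = x := by
    intro x
    have h1 := hα2 x
    have h2 := htri x
    have : β (f'' x) = -α x := by linear_combination (norm := abel) h2
    rw [this, map_neg]
    linear_combination (norm := abel) h1
  refine ⟨⟨?_, ?_⟩, hr, hl⟩
  · intro a b hab
    have := hl a
    rw [hab, hl b] at this
    exact this.symm
  · intro y
    exact ⟨g'' y + dA (β y), hr y⟩
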